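/- arXiv:1105.3067 — 2 statements merged into one kernel-verified Lean document; each statement's English description precedes it below -/
import Mathlib

section
/- For the quiver G1 consisting of two vertices v₁, v₂ with three arrows a, b, c from v₁ to v₂ and two arrows d, e from v₂ to v₁ (all vertices of dimension 1), the number of primitive cycles is 6, the quantity F(G1) = |C| + |V| − |A| − 1 equals 2, but the toric ideal of relations among the 6 cycle monomials requires more than 2 generators; hence G1 is not a complete intersection. -/
/-- A quiver (finite directed multigraph): a finite set of vertices `V`,
a finite set of arrows `A`, and source/target maps `s`, `t`. -/
structure Quiv where
  V : Type
  A : Type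
  [fintV : Fintype V]
  [fintA : Fintype A]
  [decV : DecidableEq V]
  [decA : DecidableEq A]
  s : A → V
  t : A → V

attribute [instance] Quiv.fintV Quiv.fintA Quiv.decV Quiv.decA

namespace Quiv

variable (Q : Quiv)

/-- Cyclic access to the entries of a nonempty list. -/
def cyc (l : List Q.A) (hl : l ≠ []) (i : ℕ) : Q.A :=
  l.get ⟨i % l.length, Nat.mod_lt _ (List.length_pos_iff.mpr hl)⟩

/-- `l` is a (nonempty) directed cycle: consecutive arrows compose, cyclically. -/
def IsCycleList (l : List Q.A) : Prop :=
  ∃ hl : l ≠ [], ∀ i : ℕ, Q.t (Q.cyc l hl i) = Q.s (Q.cyc l hl (i + 1))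

/-- A primitive (simple) cycle: a directed cycle visiting no vertex more than once. -/
def IsPrimCycle (l : List Q.A) : Prop :=
  Q.IsCycleList l ∧ (l.map Q.s).Nodup

/-- The set of primitive cycles of `Q`, each recorded by its (finite) set of arrows.
A primitive cycle is determined, up to rotation, by its set of arrows. -/
def primCycles : Set (Finset Q.A) :=
  { S | ∃ l : List Q.A, Q.IsPrimCycle l ∧ l.toFinset = S }

/-- The number of primitive cycles of `Q`. -/
noncomputable def numPrimCycles : ℕ := Q.primCycles.ncard

/-- One-step reachability. -/
def Step (u v : Q.V) : Prop := ∃ a : Q.A, Q.s a = u ∧ Q.t a = v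

/-- `Q` is strongly connected: every vertex is reachable from every other
by a directed path. -/
def StronglyConnected : Prop := ∀ u v : Q.V, Relation.ReflTransGen Q.Step u v

/-- `Q` has no loops. -/
def NoLoops : Prop := ∀ a : Q.A, Q.s a ≠ Q.t a

/-- In-degree of a vertex (arrows counted with multiplicity). -/
def inDeg (v : Q.V) : ℕ := (Finset.univ.filter fun a => Q.t a = v).card

/-- Out-degree of a vertex (arrows counted with multiplicity). -/
def outDeg (v : Q.V) : ℕ := (Finset.univ.filter fun a => Q.s a = v).card

/-- `F(Q) = |C| + |V| - |A| - 1`, the codimension of the associated toric variety. -/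
noncomputable def F : ℤ :=
  (Q.numPrimCycles : ℤ) + (Fintype.card Q.V : ℤ) - (Fintype.card Q.A : ℤ) - 1


open MvPolynomial in
/-- The monomial map `φ` sending the variable `y_c` of a primitive cycle `c` to the
monomial `x_c = ∏_{a ∈ c} x_a`. -/
noncomputable def cycMap (Q : Quiv) :
    MvPolynomial {c : Finset Q.A // c ∈ Q.primCycles} ℂ →ₐ[ℂ] MvPolynomial Q.A ℂ :=
  MvPolynomial.aeval fun c => ∏ a ∈ c.1, MvPolynomial.X a

/-- The quiver `G1`: two vertices with three parallel arrows from the first to the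
second and two parallel arrows back. -/
def G1 : Quiv where
  V := Bool
  A := Fin 5
  fintV := inferInstance
  fintA := inferInstance
  decV := inferInstance
  decA := inferInstance
  s := fun a => if a.1 < 3 then false else true
  t := fun a => if a.1 < 3 then true else false

lemma cyc_pair (a b : Q.A) (hl : ([a,b] : List Q.A) ≠ []) (i : ℕ) :
    Q.cyc [a,b] hl i = if i % 2 = 0 then a else b := by
  unfold cyc
  rcases Nat.mod_two_eq_zero_or_one i with h | h <;>
    simp only [List.length_cons, List.length_nil] <;>
    rw [show ((⟨i % 2, _⟩ : Fin 2) : Fin 2) = ⟨i % 2, by omega⟩ from rfl] <;>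
    simp [h]

lemma prim_pair (a b : Q.A) (h1 : Q.t a = Q.s b) (h2 : Q.t b = Q.s a)
    (h3 : Q.s a ≠ Q.s b) : Q.IsPrimCycle [a, b] := by
  refine ⟨⟨by simp, fun i => ?_⟩, by simp [h3]⟩
  rw [cyc_pair, cyc_pair]
  rcases Nat.mod_two_eq_zero_or_one i with h | h
  · have h' : (i+1) % 2 = 1 := by omega
    simp [h, h', h1]
  · have h' : (i+1) % 2 = 0 := by omega
    simp [h, h', h2]

def ar (n : Fin 5) : G1.A := n

def S6 : Finset (Finset G1.A) := ({{0,3},{0,4},{1,3},{1,4},{2,3},{2,4}} : Finset (Finset (Fin 5)))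

lemma primCycles_eq : G1.primCycles = ↑S6 := by
  ext S
  constructor
  · rintro ⟨l, ⟨⟨hl, hc⟩, hnd⟩, rfl⟩
    have hlen : l.length ≤ 2 := by
      have := hnd.length_le_card
      simpa using this.trans (le_of_eq (by decide : Fintype.card G1.V = 2))
    have hpos : 0 < l.length := List.length_pos_iff.mpr hl
    interval_cases h : l.length
    · obtain ⟨a, rfl⟩ := List.length_eq_one_iff.mp h
      have key : ∀ a : G1.A, G1.t a ≠ G1.s a := by decide
      have h0 : ∀ i, G1.cyc [a] hl i = a := fun i => by
        unfold cyc; simp [Nat.mod_one]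
      have := hc 0
      rw [h0, h0] at this
      exact absurd this (key a)
    · match l, h with
      | [a, b], _ =>
        have e0 := hc 0
        have e1 := hc 1
        rw [cyc_pair, cyc_pair] at e0
        rw [cyc_pair, cyc_pair] at e1
        norm_num at e0 e1
        have h3 : G1.s a ≠ G1.s b := by simpa using hnd
        have key : ∀ a b : G1.A, G1.t a = G1.s b → G1.t b = G1.s a →
            G1.s a ≠ G1.s b → ({a,b} : Finset G1.A) ∈ S6 := by decide
        have : ({a, b} : Finset G1.A) ∈ S6 := key a b e0 e1 h3
        simpa using this
  · intro hS
    have hS' : S ∈ S6 := hS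
    fin_cases hS'
    · exact ⟨[ar 0, ar 3], prim_pair _ _ _ (by decide) (by decide) (by decide), rfl⟩
    · exact ⟨[ar 0, ar 4], prim_pair _ _ _ (by decide) (by decide) (by decide), rfl⟩
    · exact ⟨[ar 1, ar 3], prim_pair _ _ _ (by decide) (by decide) (by decide), rfl⟩
    · exact ⟨[ar 1, ar 4], prim_pair _ _ _ (by decide) (by decide) (by decide), rfl⟩
    · exact ⟨[ar 2, ar 3], prim_pair _ _ _ (by decide) (by decide) (by decide), rfl⟩
    · exact ⟨[ar 2, ar 4], prim_pair _ _ _ (by decide) (by decide) (by decide), rfl⟩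

lemma numPrim : G1.numPrimCycles = 6 := by
  rw [numPrimCycles, primCycles_eq, Set.ncard_coe_finset]
  decide


lemma FG1 : G1.F = 2 := by
  rw [F, numPrim]
  rfl

-- Part 3 setup
open MvPolynomial

abbrev T := {c : Finset G1.A // c ∈ G1.primCycles}

def mkc (S : Finset G1.A) (h : S ∈ S6) : T := ⟨S, by rw [primCycles_eq]; exact h⟩

def c03 : T := mkc ({0,3} : Finset (Fin 5)) (by exact (by decide : ({0,3} : Finset (Fin 5)) ∈ ({{0,3},{0,4},{1,3},{1,4},{2,3},{2,4}} : Finset (Finset (Fin 5)))))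
def c04 : T := mkc ({0,4} : Finset (Fin 5)) (by exact (by decide : ({0,4} : Finset (Fin 5)) ∈ ({{0,3},{0,4},{1,3},{1,4},{2,3},{2,4}} : Finset (Finset (Fin 5)))))
def c13 : T := mkc ({1,3} : Finset (Fin 5)) (by exact (by decide : ({1,3} : Finset (Fin 5)) ∈ ({{0,3},{0,4},{1,3},{1,4},{2,3},{2,4}} : Finset (Finset (Fin 5)))))
def c14 : T := mkc ({1,4} : Finset (Fin 5)) (by exact (by decide : ({1,4} : Finset (Fin 5)) ∈ ({{0,3},{0,4},{1,3},{1,4},{2,3},{2,4}} : Finset (Finset (Fin 5)))))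
def c23 : T := mkc ({2,3} : Finset (Fin 5)) (by exact (by decide : ({2,3} : Finset (Fin 5)) ∈ ({{0,3},{0,4},{1,3},{1,4},{2,3},{2,4}} : Finset (Finset (Fin 5)))))
def c24 : T := mkc ({2,4} : Finset (Fin 5)) (by exact (by decide : ({2,4} : Finset (Fin 5)) ∈ ({{0,3},{0,4},{1,3},{1,4},{2,3},{2,4}} : Finset (Finset (Fin 5)))))

lemma T_cases (d : T) : d = c03 ∨ d = c04 ∨ d = c13 ∨ d = c14 ∨ d = c23 ∨ d = c24 := by
  obtain ⟨S, hS⟩ := d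
  have hS' : S ∈ S6 := by rw [primCycles_eq] at hS; exact hS
  fin_cases hS'
  · exact Or.inl rfl
  · exact Or.inr (Or.inl rfl)
  · exact Or.inr (Or.inr (Or.inl rfl))
  · exact Or.inr (Or.inr (Or.inr (Or.inl rfl)))
  · exact Or.inr (Or.inr (Or.inr (Or.inr (Or.inl rfl))))
  · exact Or.inr (Or.inr (Or.inr (Or.inr (Or.inr rfl))))

lemma cne {a b : T} (h : a.1 ≠ b.1) : a ≠ b := fun H => h (congrArg Subtype.val H)

section Generic


variable {σ : Type} [DecidableEq σ]

/-- Extracting the coefficient of a single variable via a univariate specialization. -/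
lemma coeff_single_eq (c : σ) (r : MvPolynomial σ ℂ) :
    ((aeval (fun d => if d = c then (Polynomial.X : Polynomial ℂ)^2 else 0)) r).coeff 2
      = MvPolynomial.coeff (Finsupp.single c 1) r := by
  induction r using MvPolynomial.induction_on' with
  | add p q hp hq => simp [map_add, MvPolynomial.coeff_add, Polynomial.coeff_add, hp, hq]
  | monomial α a =>
    rw [aeval_monomial, MvPolynomial.coeff_monomial]
    by_cases hs : ∀ d ∈ α.support, d = c
    · have hα : α = Finsupp.single c (α c) := by
        ext d
        by_cases hd : d = c
        · subst hd; simp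
        · rw [Finsupp.single_apply, if_neg (Ne.symm hd)]
          by_contra hne
          exact hd (hs d (Finsupp.mem_support_iff.mpr hne))
      rw [hα, Finsupp.prod_single_index (by rw [pow_zero])]
      rw [if_pos rfl, ← pow_mul, Polynomial.algebraMap_eq, Polynomial.coeff_C_mul,
        Polynomial.coeff_X_pow]
      rcases eq_or_ne (α c) 1 with h1 | h1
      · rw [h1]; norm_num
      · rw [if_neg (by omega), if_neg (fun hh => h1 (Finsupp.single_injective c hh)), mul_zero]
    · push_neg at hs
      obtain ⟨d, hd, hdc⟩ := hs
      have hz : (α.prod fun d k => (if d = c then (Polynomial.X : Polynomial ℂ)^2 else 0) ^ k) = 0 := by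
        apply Finset.prod_eq_zero hd
        simp only [if_neg hdc]
        exact zero_pow (Finsupp.mem_support_iff.mp hd)
      rw [hz, mul_zero, Polynomial.coeff_zero, if_neg]
      intro h
      rw [h, Finsupp.support_single_ne_zero _ one_ne_zero] at hd
      simp only [Finset.mem_singleton] at hd
      exact hdc hd

/-- At a squarefree quadratic monomial, multiplication only sees the constant term of `f`
when `p` has no constant or relevant linear terms. -/
lemma coeff_quad_mul (u v : σ) (huv : u ≠ v) (f p : MvPolynomial σ ℂ)
    (h0 : MvPolynomial.coeff 0 p = 0)
    (hu : MvPolynomial.coeff (Finsupp.single u 1) p = 0)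
    (hv : MvPolynomial.coeff (Finsupp.single v 1) p = 0) :
    MvPolynomial.coeff (Finsupp.single u 1 + Finsupp.single v 1) (f * p)
      = MvPolynomial.coeff 0 f *
        MvPolynomial.coeff (Finsupp.single u 1 + Finsupp.single v 1) p := by
  set m : σ →₀ ℕ := Finsupp.single u 1 + Finsupp.single v 1 with hm
  rw [MvPolynomial.coeff_mul]
  apply Finset.sum_eq_single_of_mem (0, m)
  · rw [Finset.HasAntidiagonal.mem_antidiagonal]; exact zero_add m
  · rintro ⟨x, y⟩ hxy hne
    rw [Finset.HasAntidiagonal.mem_antidiagonal] at hxy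
    simp only at hxy ⊢
    by_cases hy : y = m
    · exfalso
      have hx0 : x = 0 := by
        have h' := hxy
        rw [hy] at h'
        have h'' : x + m = 0 + m := by rw [h', zero_add]
        exact add_right_cancel h''
      exact hne (by rw [hx0, hy])
    -- y ≤ m coordinatewise
    have hle : ∀ d, y d ≤ m d := by
      intro d
      have : x d + y d = m d := by rw [← Finsupp.add_apply, hxy]
      omega
    have hmu : m u = 1 := by
      rw [hm, Finsupp.add_apply, Finsupp.single_apply, Finsupp.single_apply,
        if_pos rfl, if_neg (Ne.symm huv)]
      rfl
    have hmv : m v = 1 := by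
      rw [hm, Finsupp.add_apply, Finsupp.single_apply, Finsupp.single_apply,
        if_neg huv, if_pos rfl]
    have hmo : ∀ d, d ≠ u → d ≠ v → m d = 0 := by
      intro d h1 h2
      rw [hm, Finsupp.add_apply, Finsupp.single_apply, Finsupp.single_apply,
        if_neg (Ne.symm h1), if_neg (Ne.symm h2)]
      rfl
    have hcases : y = Finsupp.single u (y u) + Finsupp.single v (y v) := by
      ext d
      rw [Finsupp.add_apply, Finsupp.single_apply, Finsupp.single_apply]
      by_cases h1 : d = u
      · subst h1; rw [if_pos rfl, if_neg (fun h => huv h.symm)]; ring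
      · by_cases h2 : d = v
        · subst h2; rw [if_neg (fun h => huv h), if_pos rfl]; ring
        · rw [if_neg (Ne.symm h1), if_neg (Ne.symm h2)]
          have := hle d
          rw [hmo d h1 h2] at this
          omega
    have hyu : y u ≤ 1 := by have := hle u; rwa [hmu] at this
    have hyv : y v ≤ 1 := by have := hle v; rwa [hmv] at this
    interval_cases h1 : y u <;> interval_cases h2 : y v
    · rw [hcases]
      simp only [Finsupp.single_zero, add_zero]
      rw [h0, mul_zero]
    · rw [hcases]
      simp only [Finsupp.single_zero, zero_add]
      rw [hv, mul_zero]
    · rw [hcases]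
      simp only [Finsupp.single_zero, add_zero]
      rw [hu, mul_zero]
    · exact absurd (hcases.trans hm.symm) hy

end Generic


lemma d1_nonempty (d : T) : d.1.Nonempty := by
  obtain ⟨l, ⟨⟨hl, _⟩, _⟩, hS⟩ := d.2
  rw [← hS]
  cases l with
  | nil => exact absurd rfl hl
  | cons x xs => exact ⟨x, by simp⟩

/-- constant coefficient of anything in the kernel vanishes -/
lemma ker_coeff_zero (r : MvPolynomial T ℂ) (hr : cycMap G1 r = 0) :
    MvPolynomial.coeff 0 r = 0 := by
  have h2 : (MvPolynomial.aeval (fun _ : G1.A => (0:ℂ))).comp (cycMap G1)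
      = MvPolynomial.aeval (fun _ : T => (0:ℂ)) := by
    rw [cycMap, MvPolynomial.comp_aeval]
    congr 1
    funext d
    rw [map_prod]
    obtain ⟨a, ha⟩ := d1_nonempty d
    apply Finset.prod_eq_zero ha
    rw [MvPolynomial.aeval_X]
  have h3 := DFunLike.congr_fun h2 r
  simp only [AlgHom.comp_apply] at h3
  rw [hr, map_zero] at h3
  have h4 : (MvPolynomial.aeval (0 : T → ℂ)) r = algebraMap ℂ ℂ (constantCoeff r) :=
    MvPolynomial.aeval_zero' r
  rw [show (fun _ : T => (0:ℂ)) = (0 : T → ℂ) from rfl, h4] at h3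
  rw [← MvPolynomial.constantCoeff_eq]
  simpa using h3.symm

lemma L1gen (c : T) (v : G1.A → Polynomial ℂ)
    (hv : ∀ d : T, ∏ a ∈ d.1, v a = if d = c then (Polynomial.X : Polynomial ℂ)^2 else 0)
    (r : MvPolynomial T ℂ) (hr : cycMap G1 r = 0) :
    MvPolynomial.coeff (Finsupp.single c 1) r = 0 := by
  rw [← coeff_single_eq]
  have h2 : (MvPolynomial.aeval v).comp (cycMap G1)
      = MvPolynomial.aeval (fun d : T => if d = c then (Polynomial.X : Polynomial ℂ)^2 else 0) := by
    rw [cycMap, MvPolynomial.comp_aeval]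
    congr 1
    funext d
    rw [map_prod]
    simp only [MvPolynomial.aeval_X]
    exact hv d
  have h3 := DFunLike.congr_fun h2 r
  simp only [AlgHom.comp_apply] at h3
  rw [← h3, hr, map_zero, Polynomial.coeff_zero]

-- test vector evaluation
example : ∀ d : T, ∏ a ∈ d.1, (![Polynomial.X, 0, 0, Polynomial.X, 0] : Fin 5 → Polynomial ℂ) a
    = if d = c03 then (Polynomial.X : Polynomial ℂ)^2 else 0 := by
  intro d
  rcases T_cases d with rfl | rfl | rfl | rfl | rfl | rfl
  · erw [show c03.1 = ({ar 0, ar 3} : Finset G1.A) from rfl, Finset.prod_pair (show ar 0 ≠ ar 3 by decide),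
      if_pos rfl]
    simp [ar, Matrix.cons_val_succ, pow_two]
  · erw [show c04.1 = ({ar 0, ar 4} : Finset G1.A) from rfl, Finset.prod_pair (show ar 0 ≠ ar 4 by decide),
      if_neg (cne (by decide))]
    simp [ar, Matrix.cons_val_succ]
  · erw [show c13.1 = ({ar 1, ar 3} : Finset G1.A) from rfl, Finset.prod_pair (show ar 1 ≠ ar 3 by decide),
      if_neg (cne (by decide))]
    simp [ar, Matrix.cons_val_succ]
  · erw [show c14.1 = ({ar 1, ar 4} : Finset G1.A) from rfl, Finset.prod_pair (show ar 1 ≠ ar 4 by decide),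
      if_neg (cne (by decide))]
    simp [ar, Matrix.cons_val_succ]
  · erw [show c23.1 = ({ar 2, ar 3} : Finset G1.A) from rfl, Finset.prod_pair (show ar 2 ≠ ar 3 by decide),
      if_neg (cne (by decide))]
    simp [ar, Matrix.cons_val_succ]
  · erw [show c24.1 = ({ar 2, ar 4} : Finset G1.A) from rfl, Finset.prod_pair (show ar 2 ≠ ar 4 by decide),
      if_neg (cne (by decide))]
    simp [ar, Matrix.cons_val_succ]


-- linear-coefficient vanishing for the four cycles we need
lemma hv03 : ∀ d : T, ∏ a ∈ d.1, (![Polynomial.X, 0, 0, Polynomial.X, 0] : Fin 5 → Polynomial ℂ) a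
    = if d = c03 then (Polynomial.X : Polynomial ℂ)^2 else 0 := by
  intro d
  rcases T_cases d with rfl | rfl | rfl | rfl | rfl | rfl
  · erw [show c03.1 = ({ar 0, ar 3} : Finset G1.A) from rfl,
      Finset.prod_pair (show ar 0 ≠ ar 3 by decide), if_pos rfl]
    simp [ar, Matrix.cons_val_succ, pow_two]
  · erw [show c04.1 = ({ar 0, ar 4} : Finset G1.A) from rfl,
      Finset.prod_pair (show ar 0 ≠ ar 4 by decide), if_neg (cne (by decide))]
    simp [ar, Matrix.cons_val_succ]
  · erw [show c13.1 = ({ar 1, ar 3} : Finset G1.A) from rfl,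
      Finset.prod_pair (show ar 1 ≠ ar 3 by decide), if_neg (cne (by decide))]
    simp [ar, Matrix.cons_val_succ]
  · erw [show c14.1 = ({ar 1, ar 4} : Finset G1.A) from rfl,
      Finset.prod_pair (show ar 1 ≠ ar 4 by decide), if_neg (cne (by decide))]
    simp [ar, Matrix.cons_val_succ]
  · erw [show c23.1 = ({ar 2, ar 3} : Finset G1.A) from rfl,
      Finset.prod_pair (show ar 2 ≠ ar 3 by decide), if_neg (cne (by decide))]
    simp [ar, Matrix.cons_val_succ]
  · erw [show c24.1 = ({ar 2, ar 4} : Finset G1.A) from rfl,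
      Finset.prod_pair (show ar 2 ≠ ar 4 by decide), if_neg (cne (by decide))]
    simp [ar, Matrix.cons_val_succ]

lemma hv13 : ∀ d : T, ∏ a ∈ d.1, (![0, Polynomial.X, 0, Polynomial.X, 0] : Fin 5 → Polynomial ℂ) a
    = if d = c13 then (Polynomial.X : Polynomial ℂ)^2 else 0 := by
  intro d
  rcases T_cases d with rfl | rfl | rfl | rfl | rfl | rfl
  · erw [show c03.1 = ({ar 0, ar 3} : Finset G1.A) from rfl,
      Finset.prod_pair (show ar 0 ≠ ar 3 by decide), if_neg (cne (by decide))]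
    simp [ar, Matrix.cons_val_succ]
  · erw [show c04.1 = ({ar 0, ar 4} : Finset G1.A) from rfl,
      Finset.prod_pair (show ar 0 ≠ ar 4 by decide), if_neg (cne (by decide))]
    simp [ar, Matrix.cons_val_succ]
  · erw [show c13.1 = ({ar 1, ar 3} : Finset G1.A) from rfl,
      Finset.prod_pair (show ar 1 ≠ ar 3 by decide), if_pos rfl]
    simp [ar, Matrix.cons_val_succ, pow_two]
  · erw [show c14.1 = ({ar 1, ar 4} : Finset G1.A) from rfl,
      Finset.prod_pair (show ar 1 ≠ ar 4 by decide), if_neg (cne (by decide))]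
    simp [ar, Matrix.cons_val_succ]
  · erw [show c23.1 = ({ar 2, ar 3} : Finset G1.A) from rfl,
      Finset.prod_pair (show ar 2 ≠ ar 3 by decide), if_neg (cne (by decide))]
    simp [ar, Matrix.cons_val_succ]
  · erw [show c24.1 = ({ar 2, ar 4} : Finset G1.A) from rfl,
      Finset.prod_pair (show ar 2 ≠ ar 4 by decide), if_neg (cne (by decide))]
    simp [ar, Matrix.cons_val_succ]

lemma hv14 : ∀ d : T, ∏ a ∈ d.1, (![0, Polynomial.X, 0, 0, Polynomial.X] : Fin 5 → Polynomial ℂ) a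
    = if d = c14 then (Polynomial.X : Polynomial ℂ)^2 else 0 := by
  intro d
  rcases T_cases d with rfl | rfl | rfl | rfl | rfl | rfl
  · erw [show c03.1 = ({ar 0, ar 3} : Finset G1.A) from rfl,
      Finset.prod_pair (show ar 0 ≠ ar 3 by decide), if_neg (cne (by decide))]
    simp [ar, Matrix.cons_val_succ]
  · erw [show c04.1 = ({ar 0, ar 4} : Finset G1.A) from rfl,
      Finset.prod_pair (show ar 0 ≠ ar 4 by decide), if_neg (cne (by decide))]
    simp [ar, Matrix.cons_val_succ]
  · erw [show c13.1 = ({ar 1, ar 3} : Finset G1.A) from rfl,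
      Finset.prod_pair (show ar 1 ≠ ar 3 by decide), if_neg (cne (by decide))]
    simp [ar, Matrix.cons_val_succ]
  · erw [show c14.1 = ({ar 1, ar 4} : Finset G1.A) from rfl,
      Finset.prod_pair (show ar 1 ≠ ar 4 by decide), if_pos rfl]
    simp [ar, Matrix.cons_val_succ, pow_two]
  · erw [show c23.1 = ({ar 2, ar 3} : Finset G1.A) from rfl,
      Finset.prod_pair (show ar 2 ≠ ar 3 by decide), if_neg (cne (by decide))]
    simp [ar, Matrix.cons_val_succ]
  · erw [show c24.1 = ({ar 2, ar 4} : Finset G1.A) from rfl,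
      Finset.prod_pair (show ar 2 ≠ ar 4 by decide), if_neg (cne (by decide))]
    simp [ar, Matrix.cons_val_succ]

lemma hv24 : ∀ d : T, ∏ a ∈ d.1, (![0, 0, Polynomial.X, 0, Polynomial.X] : Fin 5 → Polynomial ℂ) a
    = if d = c24 then (Polynomial.X : Polynomial ℂ)^2 else 0 := by
  intro d
  rcases T_cases d with rfl | rfl | rfl | rfl | rfl | rfl
  · erw [show c03.1 = ({ar 0, ar 3} : Finset G1.A) from rfl,
      Finset.prod_pair (show ar 0 ≠ ar 3 by decide), if_neg (cne (by decide))]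
    simp [ar, Matrix.cons_val_succ]
  · erw [show c04.1 = ({ar 0, ar 4} : Finset G1.A) from rfl,
      Finset.prod_pair (show ar 0 ≠ ar 4 by decide), if_neg (cne (by decide))]
    simp [ar, Matrix.cons_val_succ]
  · erw [show c13.1 = ({ar 1, ar 3} : Finset G1.A) from rfl,
      Finset.prod_pair (show ar 1 ≠ ar 3 by decide), if_neg (cne (by decide))]
    simp [ar, Matrix.cons_val_succ]
  · erw [show c14.1 = ({ar 1, ar 4} : Finset G1.A) from rfl,
      Finset.prod_pair (show ar 1 ≠ ar 4 by decide), if_neg (cne (by decide))]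
    simp [ar, Matrix.cons_val_succ]
  · erw [show c23.1 = ({ar 2, ar 3} : Finset G1.A) from rfl,
      Finset.prod_pair (show ar 2 ≠ ar 3 by decide), if_neg (cne (by decide))]
    simp [ar, Matrix.cons_val_succ]
  · erw [show c24.1 = ({ar 2, ar 4} : Finset G1.A) from rfl,
      Finset.prod_pair (show ar 2 ≠ ar 4 by decide), if_pos rfl]
    simp [ar, Matrix.cons_val_succ, pow_two]

/-- an auxiliary inequality of monomials -/
lemma sadd_ne {σ : Type} [DecidableEq σ] {a b a' b' w : σ} (h1 : a ≠ w) (h2 : b ≠ w)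
    (h3 : a' = w ∨ b' = w) :
    Finsupp.single a 1 + Finsupp.single b 1 ≠ Finsupp.single a' 1 + Finsupp.single b' (1:ℕ) := by
  intro H
  have hge : 1 ≤ ((Finsupp.single a' 1 + Finsupp.single b' 1 : σ →₀ ℕ)) w := by
    rcases h3 with rfl | rfl
    · rw [Finsupp.add_apply, Finsupp.single_apply, if_pos rfl]
      exact Nat.le_add_right 1 _
    · rw [Finsupp.add_apply]
      rw [show (Finsupp.single b' (1:ℕ)) b' = 1 from by rw [Finsupp.single_apply, if_pos rfl]]
      exact Nat.le_add_left 1 _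
  rw [← H, Finsupp.add_apply, Finsupp.single_apply, Finsupp.single_apply,
    if_neg h1, if_neg h2] at hge
  omega

noncomputable def M1 : MvPolynomial T ℂ := X c03 * X c14 - X c04 * X c13
noncomputable def M2 : MvPolynomial T ℂ := X c03 * X c24 - X c04 * X c23
noncomputable def M3 : MvPolynomial T ℂ := X c13 * X c24 - X c14 * X c23

lemma XX (a b : T) : (X a * X b : MvPolynomial T ℂ)
    = monomial (Finsupp.single a 1 + Finsupp.single b 1) 1 := by
  rw [show (X a : MvPolynomial T ℂ) = X a ^ 1 from (pow_one _).symm,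
    show (X b : MvPolynomial T ℂ) = X b ^ 1 from (pow_one _).symm,
    MvPolynomial.X_pow_eq_monomial, MvPolynomial.X_pow_eq_monomial,
    MvPolynomial.monomial_mul, one_mul]

local notation "m1" => (Finsupp.single c03 1 + Finsupp.single c14 1 : T →₀ ℕ)
local notation "m3" => (Finsupp.single c03 1 + Finsupp.single c24 1 : T →₀ ℕ)
local notation "m5" => (Finsupp.single c13 1 + Finsupp.single c24 1 : T →₀ ℕ)

lemma kerM1 : cycMap G1 M1 = 0 := by
  rw [M1, map_sub, map_mul, map_mul]
  simp only [cycMap, MvPolynomial.aeval_X]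
  rw [show c03.1 = ({ar 0, ar 3} : Finset G1.A) from rfl,
    show c14.1 = ({ar 1, ar 4} : Finset G1.A) from rfl,
    show c04.1 = ({ar 0, ar 4} : Finset G1.A) from rfl,
    show c13.1 = ({ar 1, ar 3} : Finset G1.A) from rfl,
    Finset.prod_pair (show ar 0 ≠ ar 3 by decide),
    Finset.prod_pair (show ar 1 ≠ ar 4 by decide),
    Finset.prod_pair (show ar 0 ≠ ar 4 by decide),
    Finset.prod_pair (show ar 1 ≠ ar 3 by decide)]
  ring

lemma kerM2 : cycMap G1 M2 = 0 := by
  rw [M2, map_sub, map_mul, map_mul]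
  simp only [cycMap, MvPolynomial.aeval_X]
  rw [show c03.1 = ({ar 0, ar 3} : Finset G1.A) from rfl,
    show c24.1 = ({ar 2, ar 4} : Finset G1.A) from rfl,
    show c04.1 = ({ar 0, ar 4} : Finset G1.A) from rfl,
    show c23.1 = ({ar 2, ar 3} : Finset G1.A) from rfl,
    Finset.prod_pair (show ar 0 ≠ ar 3 by decide),
    Finset.prod_pair (show ar 2 ≠ ar 4 by decide),
    Finset.prod_pair (show ar 0 ≠ ar 4 by decide),
    Finset.prod_pair (show ar 2 ≠ ar 3 by decide)]
  ring

lemma kerM3 : cycMap G1 M3 = 0 := by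
  rw [M3, map_sub, map_mul, map_mul]
  simp only [cycMap, MvPolynomial.aeval_X]
  rw [show c13.1 = ({ar 1, ar 3} : Finset G1.A) from rfl,
    show c24.1 = ({ar 2, ar 4} : Finset G1.A) from rfl,
    show c14.1 = ({ar 1, ar 4} : Finset G1.A) from rfl,
    show c23.1 = ({ar 2, ar 3} : Finset G1.A) from rfl,
    Finset.prod_pair (show ar 1 ≠ ar 3 by decide),
    Finset.prod_pair (show ar 2 ≠ ar 4 by decide),
    Finset.prod_pair (show ar 1 ≠ ar 4 by decide),
    Finset.prod_pair (show ar 2 ≠ ar 3 by decide)]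
  ring

-- coefficients of minors
lemma cM1m1 : MvPolynomial.coeff m1 M1 = 1 := by
  rw [M1, MvPolynomial.coeff_sub, XX, XX, MvPolynomial.coeff_monomial,
    MvPolynomial.coeff_monomial, if_pos rfl,
    if_neg (sadd_ne (cne (by decide)) (cne (by decide)) (Or.inl rfl))]
  norm_num

lemma cM1m3 : MvPolynomial.coeff m3 M1 = 0 := by
  rw [M1, MvPolynomial.coeff_sub, XX, XX, MvPolynomial.coeff_monomial,
    MvPolynomial.coeff_monomial,
    if_neg (sadd_ne (cne (by decide)) (cne (by decide)) (Or.inr rfl)),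
    if_neg (sadd_ne (cne (by decide)) (cne (by decide)) (Or.inl rfl))]
  norm_num

lemma cM1m5 : MvPolynomial.coeff m5 M1 = 0 := by
  rw [M1, MvPolynomial.coeff_sub, XX, XX, MvPolynomial.coeff_monomial,
    MvPolynomial.coeff_monomial,
    if_neg (sadd_ne (cne (by decide)) (cne (by decide)) (Or.inr rfl)),
    if_neg (sadd_ne (cne (by decide)) (cne (by decide)) (Or.inr rfl))]
  norm_num

lemma cM2m3 : MvPolynomial.coeff m3 M2 = 1 := by
  rw [M2, MvPolynomial.coeff_sub, XX, XX, MvPolynomial.coeff_monomial,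
    MvPolynomial.coeff_monomial, if_pos rfl,
    if_neg (sadd_ne (cne (by decide)) (cne (by decide)) (Or.inl rfl))]
  norm_num

lemma cM2m5 : MvPolynomial.coeff m5 M2 = 0 := by
  rw [M2, MvPolynomial.coeff_sub, XX, XX, MvPolynomial.coeff_monomial,
    MvPolynomial.coeff_monomial,
    if_neg (sadd_ne (cne (by decide)) (cne (by decide)) (Or.inl rfl)),
    if_neg (sadd_ne (cne (by decide)) (cne (by decide)) (Or.inl rfl))]
  norm_num

lemma cM3m3 : MvPolynomial.coeff m3 M3 = 0 := by
  rw [M3, MvPolynomial.coeff_sub, XX, XX, MvPolynomial.coeff_monomial,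
    MvPolynomial.coeff_monomial,
    if_neg (sadd_ne (cne (by decide)) (cne (by decide)) (Or.inl rfl)),
    if_neg (sadd_ne (cne (by decide)) (cne (by decide)) (Or.inl rfl))]
  norm_num

lemma cM3m5 : MvPolynomial.coeff m5 M3 = 1 := by
  rw [M3, MvPolynomial.coeff_sub, XX, XX, MvPolynomial.coeff_monomial,
    MvPolynomial.coeff_monomial, if_pos rfl,
    if_neg (sadd_ne (cne (by decide)) (cne (by decide)) (Or.inl rfl))]
  norm_num



/-- `G1` has 6 primitive cycles, `F(G1) = |C| + |V| - |A| - 1 = 2`, but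
the toric ideal of relations among the six cycle monomials cannot be generated by 2
elements; hence `G1` is not a complete intersection. -/
theorem stmt_16 :
    G1.numPrimCycles = 6 ∧ G1.F = 2 ∧
    ¬ ∃ p q : MvPolynomial {c : Finset G1.A // c ∈ G1.primCycles} ℂ,
      RingHom.ker (cycMap G1).toRingHom = Ideal.span {p, q} := by
  refine ⟨numPrim, FG1, ?_⟩
  rintro ⟨p, q, hker⟩
  have hp : cycMap G1 p = 0 := by
    have h : p ∈ Ideal.span {p, q} := Ideal.subset_span (Set.mem_insert p {q})
    rw [← hker] at h
    exact RingHom.mem_ker.mp h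
  have hq : cycMap G1 q = 0 := by
    have h : q ∈ Ideal.span {p, q} :=
      Ideal.subset_span (Set.mem_insert_of_mem p (Set.mem_singleton q))
    rw [← hker] at h
    exact RingHom.mem_ker.mp h
  obtain ⟨f1, g1, hfg1⟩ := Ideal.mem_span_pair.mp
    (by rw [← hker]; exact RingHom.mem_ker.mpr kerM1 : M1 ∈ Ideal.span {p, q})
  obtain ⟨f2, g2, hfg2⟩ := Ideal.mem_span_pair.mp
    (by rw [← hker]; exact RingHom.mem_ker.mpr kerM2 : M2 ∈ Ideal.span {p, q})
  obtain ⟨f3, g3, hfg3⟩ := Ideal.mem_span_pair.mp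
    (by rw [← hker]; exact RingHom.mem_ker.mpr kerM3 : M3 ∈ Ideal.span {p, q})
  have hp0 := ker_coeff_zero p hp
  have hq0 := ker_coeff_zero q hq
  have hp03 := L1gen c03 _ hv03 p hp
  have hq03 := L1gen c03 _ hv03 q hq
  have hp13 := L1gen c13 _ hv13 p hp
  have hq13 := L1gen c13 _ hv13 q hq
  have hp14 := L1gen c14 _ hv14 p hp
  have hq14 := L1gen c14 _ hv14 q hq
  have hp24 := L1gen c24 _ hv24 p hp
  have hq24 := L1gen c24 _ hv24 q hq
  have E11 : MvPolynomial.coeff 0 f1 * MvPolynomial.coeff m1 p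
      + MvPolynomial.coeff 0 g1 * MvPolynomial.coeff m1 q = 1 := by
    rw [← coeff_quad_mul c03 c14 (cne (by decide)) f1 p hp0 hp03 hp14,
      ← coeff_quad_mul c03 c14 (cne (by decide)) g1 q hq0 hq03 hq14,
      ← MvPolynomial.coeff_add, hfg1, cM1m1]
  have E13 : MvPolynomial.coeff 0 f1 * MvPolynomial.coeff m3 p
      + MvPolynomial.coeff 0 g1 * MvPolynomial.coeff m3 q = 0 := by
    rw [← coeff_quad_mul c03 c24 (cne (by decide)) f1 p hp0 hp03 hp24,
      ← coeff_quad_mul c03 c24 (cne (by decide)) g1 q hq0 hq03 hq24,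
      ← MvPolynomial.coeff_add, hfg1, cM1m3]
  have E15 : MvPolynomial.coeff 0 f1 * MvPolynomial.coeff m5 p
      + MvPolynomial.coeff 0 g1 * MvPolynomial.coeff m5 q = 0 := by
    rw [← coeff_quad_mul c13 c24 (cne (by decide)) f1 p hp0 hp13 hp24,
      ← coeff_quad_mul c13 c24 (cne (by decide)) g1 q hq0 hq13 hq24,
      ← MvPolynomial.coeff_add, hfg1, cM1m5]
  have E23 : MvPolynomial.coeff 0 f2 * MvPolynomial.coeff m3 p
      + MvPolynomial.coeff 0 g2 * MvPolynomial.coeff m3 q = 1 := by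
    rw [← coeff_quad_mul c03 c24 (cne (by decide)) f2 p hp0 hp03 hp24,
      ← coeff_quad_mul c03 c24 (cne (by decide)) g2 q hq0 hq03 hq24,
      ← MvPolynomial.coeff_add, hfg2, cM2m3]
  have E25 : MvPolynomial.coeff 0 f2 * MvPolynomial.coeff m5 p
      + MvPolynomial.coeff 0 g2 * MvPolynomial.coeff m5 q = 0 := by
    rw [← coeff_quad_mul c13 c24 (cne (by decide)) f2 p hp0 hp13 hp24,
      ← coeff_quad_mul c13 c24 (cne (by decide)) g2 q hq0 hq13 hq24,
      ← MvPolynomial.coeff_add, hfg2, cM2m5]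
  have E33 : MvPolynomial.coeff 0 f3 * MvPolynomial.coeff m3 p
      + MvPolynomial.coeff 0 g3 * MvPolynomial.coeff m3 q = 0 := by
    rw [← coeff_quad_mul c03 c24 (cne (by decide)) f3 p hp0 hp03 hp24,
      ← coeff_quad_mul c03 c24 (cne (by decide)) g3 q hq0 hq03 hq24,
      ← MvPolynomial.coeff_add, hfg3, cM3m3]
  have E35 : MvPolynomial.coeff 0 f3 * MvPolynomial.coeff m5 p
      + MvPolynomial.coeff 0 g3 * MvPolynomial.coeff m5 q = 1 := by
    rw [← coeff_quad_mul c13 c24 (cne (by decide)) f3 p hp0 hp13 hp24,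
      ← coeff_quad_mul c13 c24 (cne (by decide)) g3 q hq0 hq13 hq24,
      ← MvPolynomial.coeff_add, hfg3, cM3m5]
  set A1 := MvPolynomial.coeff 0 f1
  set B1 := MvPolynomial.coeff 0 g1
  set A2 := MvPolynomial.coeff 0 f2
  set B2 := MvPolynomial.coeff 0 g2
  set A3 := MvPolynomial.coeff 0 f3
  set B3 := MvPolynomial.coeff 0 g3
  set P1 := MvPolynomial.coeff m1 p
  set Q1 := MvPolynomial.coeff m1 q
  set P3 := MvPolynomial.coeff m3 p
  set Q3 := MvPolynomial.coeff m3 q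
  set P5 := MvPolynomial.coeff m5 p
  set Q5 := MvPolynomial.coeff m5 q
  have hD1 : A1 * (P3*Q5 - P5*Q3) = 0 := by linear_combination Q5 * E13 - Q3 * E15
  have hD2 : B1 * (P3*Q5 - P5*Q3) = 0 := by linear_combination P3 * E15 - P5 * E13
  have hD : P3*Q5 - P5*Q3 = 0 := by
    linear_combination (-(P3*Q5 - P5*Q3)) * E11 + P1 * hD1 + Q1 * hD2
  have hMD : (A2*B3 - A3*B2) * (P3*Q5 - P5*Q3) = 1 := by
    linear_combination (A3*P5 + B3*Q5) * E23 + E35 - (A3*P3 + B3*Q3) * E25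
  have hcontra : (1:ℂ) = 0 := by rw [← hMD, hD, mul_zero]
  exact one_ne_zero hcontra

end Quiv
end

section
/- Let Q be a strongly connected quiver on n+1 ≥ 3 vertices with no loops, in which every vertex has in-degree and out-degree at least 2, and in which some primitive cycle has length strictly less than n+1. Let Q' be the quotient quiver obtained by gluing the vertices of such a shorter primitive cycle into one vertex and Q'' the quiver obtained from Q' by deleting all loops. Then Q'' is strongly connected, has at least 2 and at most n vertices, and every vertex of Q'' except possibly the glued vertex has in-degree and out-degree at least 2. -/
namespace Quiv

variable (Q : Quiv)

/-- The quiver obtained from `Q` by gluing the set `S` of vertices into a single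
vertex `Sum.inr ()` and deleting the resulting loops (the arrows with both
endpoints in `S`). -/
def glueDel (Q : Quiv) (S : Finset Q.V) : Quiv where
  V := {v : Q.V // v ∉ S} ⊕ Unit
  A := {a : Q.A // ¬(Q.s a ∈ S ∧ Q.t a ∈ S)}
  fintV := inferInstance
  fintA := inferInstance
  decV := inferInstance
  decA := inferInstance
  s := fun a => if h : Q.s a.1 ∈ S then Sum.inr () else Sum.inl ⟨Q.s a.1, h⟩
  t := fun a => if h : Q.t a.1 ∈ S then Sum.inr () else Sum.inl ⟨Q.t a.1, h⟩

/-- let `Q` be strongly connected and loop-free on `n+1 ≥ 3` vertices,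
all in- and out-degrees at least 2, and let `l` be a primitive cycle of length less
than `n+1`. Gluing the vertices of `l` into one vertex and deleting all loops yields
a strongly connected quiver `Q''` with at least 2 and at most `n` vertices in which
every vertex except possibly the glued vertex has in- and out-degree at least 2. -/
theorem stmt_17 (Q : Quiv) (n : ℕ) (h3 : 3 ≤ n + 1) (hcard : Fintype.card Q.V = n + 1)
    (hSC : Q.StronglyConnected) (hNL : Q.NoLoops)
    (hdeg : ∀ v : Q.V, 2 ≤ Q.inDeg v ∧ 2 ≤ Q.outDeg v)
    (l : List Q.A) (hl : Q.IsPrimCycle l) (hlen : l.length < n + 1) :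
    (Q.glueDel (l.map Q.s).toFinset).StronglyConnected ∧
    2 ≤ Fintype.card (Q.glueDel (l.map Q.s).toFinset).V ∧
    Fintype.card (Q.glueDel (l.map Q.s).toFinset).V ≤ n ∧
    ∀ v : (Q.glueDel (l.map Q.s).toFinset).V, v ≠ Sum.inr () →
      2 ≤ (Q.glueDel (l.map Q.s).toFinset).inDeg v ∧
      2 ≤ (Q.glueDel (l.map Q.s).toFinset).outDeg v := by
  classical
  obtain ⟨⟨hlne, hcyc⟩, hnd⟩ := hl
  set S : Finset Q.V := (l.map Q.s).toFinset with hS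
  have hlpos : 0 < l.length := List.length_pos_iff.mpr hlne
  have hScard : S.card = l.length := by
    rw [hS, List.toFinset_card_of_nodup hnd, List.length_map]
  have hlen1 : l.length ≠ 1 := by
    intro h1
    have h0 := hcyc 0
    have e : Q.cyc l hlne 0 = Q.cyc l hlne 1 := by
      unfold Quiv.cyc
      congr 1
      exact Fin.ext (by omega)
    rw [e] at h0
    exact hNL _ h0.symm
  have hlen2 : 2 ≤ l.length := by omega
  -- the projection map
  set π : Q.V → (Q.glueDel S).V :=
    fun v => if h : v ∈ S then Sum.inr () else Sum.inl ⟨v, h⟩ with hπ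
  have hstep : ∀ u v, Q.Step u v →
      Relation.ReflTransGen (Q.glueDel S).Step (π u) (π v) := by
    rintro u v ⟨a, ha, ha'⟩
    by_cases h : Q.s a ∈ S ∧ Q.t a ∈ S
    · have : π u = π v := by
        simp [hπ, ← ha, ← ha', h.1, h.2]
        rfl
      rw [this]
    · refine Relation.ReflTransGen.single ⟨⟨a, h⟩, ?_, ?_⟩
      · show (if h : Q.s a ∈ S then Sum.inr () else Sum.inl ⟨Q.s a, h⟩) = π u
        simp [hπ, ← ha]
        congr
      · show (if h : Q.t a ∈ S then Sum.inr () else Sum.inl ⟨Q.t a, h⟩) = π v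
        simp [hπ, ← ha']
        congr
  have hlift : ∀ u v, Relation.ReflTransGen Q.Step u v →
      Relation.ReflTransGen (Q.glueDel S).Step (π u) (π v) := by
    intro u v h
    induction h with
    | refl => exact .refl
    | tail _ h ih => exact ih.trans (hstep _ _ h)
  have hsurj : ∀ x : (Q.glueDel S).V, ∃ u, π u = x := by
    intro x
    match x with
    | Sum.inl ⟨w, hw⟩ => exact ⟨w, by simp [hπ, hw]; rfl⟩
    | Sum.inr () =>
        refine ⟨Q.s (l.head hlne), ?_⟩
        have : Q.s (l.head hlne) ∈ S := by
          rw [hS, List.mem_toFinset, List.mem_map]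
          exact ⟨_, List.head_mem hlne, rfl⟩
        simp [hπ, this]
        rfl
  refine ⟨?_, ?_, ?_, ?_⟩
  · intro x y
    obtain ⟨u, hu⟩ := hsurj x
    obtain ⟨v, hv⟩ := hsurj y
    rw [← hu, ← hv]
    exact hlift u v (hSC u v)
  · have : Fintype.card (Q.glueDel S).V
        = Fintype.card {v : Q.V // v ∉ S} + 1 := by
      exact (Fintype.card_sum (α := {v : Q.V // v ∉ S}) (β := Unit)).trans (by rw [Fintype.card_unit])
    rw [this]
    have : Fintype.card {v : Q.V // v ∉ S} = Fintype.card Q.V - S.card := by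
      rw [← Fintype.card_coe S]
      exact Fintype.card_subtype_compl _
    omega
  · have : Fintype.card (Q.glueDel S).V
        = Fintype.card {v : Q.V // v ∉ S} + 1 := by
      exact (Fintype.card_sum (α := {v : Q.V // v ∉ S}) (β := Unit)).trans (by rw [Fintype.card_unit])
    rw [this]
    have : Fintype.card {v : Q.V // v ∉ S} = Fintype.card Q.V - S.card := by
      rw [← Fintype.card_coe S]
      exact Fintype.card_subtype_compl _
    omega
  · rintro (⟨w, hw⟩ | ⟨⟩) hv
    · constructor
      · calc 2 ≤ Q.inDeg w := (hdeg w).1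
          _ = Fintype.card {a : Q.A // Q.t a = w} := (Fintype.card_subtype _).symm
          _ ≤ Fintype.card {a : (Q.glueDel S).A //
                (Q.glueDel S).t a = Sum.inl ⟨w, hw⟩} := by
              refine Fintype.card_le_of_injective
                (fun x => ⟨⟨x.1, fun h => hw (x.2 ▸ h.2)⟩, ?_⟩) ?_
              · have hx := x.2
                simp only [Quiv.glueDel]
                rw [dif_neg (show ¬ Q.t x.1 ∈ S by rw [hx]; exact hw)]
                exact congrArg Sum.inl (Subtype.ext hx)
              · intro a b hab
                exact Subtype.ext (congrArg (fun y => y.1.1) hab)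
          _ = (Q.glueDel S).inDeg (Sum.inl ⟨w, hw⟩) := by
              convert Fintype.card_subtype (fun a : (Q.glueDel S).A => (Q.glueDel S).t a = Sum.inl ⟨w, hw⟩)
              unfold Quiv.inDeg
              congr
      · calc 2 ≤ Q.outDeg w := (hdeg w).2
          _ = Fintype.card {a : Q.A // Q.s a = w} := (Fintype.card_subtype _).symm
          _ ≤ Fintype.card {a : (Q.glueDel S).A //
                (Q.glueDel S).s a = Sum.inl ⟨w, hw⟩} := by
              refine Fintype.card_le_of_injective
                (fun x => ⟨⟨x.1, fun h => hw (x.2 ▸ h.1)⟩, ?_⟩) ?_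
              · have hx := x.2
                simp only [Quiv.glueDel]
                rw [dif_neg (show ¬ Q.s x.1 ∈ S by rw [hx]; exact hw)]
                exact congrArg Sum.inl (Subtype.ext hx)
              · intro a b hab
                exact Subtype.ext (congrArg (fun y => y.1.1) hab)
          _ = (Q.glueDel S).outDeg (Sum.inl ⟨w, hw⟩) := by
              convert Fintype.card_subtype (fun a : (Q.glueDel S).A => (Q.glueDel S).s a = Sum.inl ⟨w, hw⟩)
              unfold Quiv.outDeg
              congr
    · exact absurd rfl hv

end Quiv
end
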